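/- Let k ≥ 2 be even and q ≥ 3. Let S_k(q) be the ℚ-linear span of {ζ(k,a/q)/π^k : 1 ≤ a < q, gcd(a,q) = 1} in ℝ, and let Ŝ_k(q) be the ℚ-linear span of {1} ∪ {ζ(k,a/q)/π^k : 1 ≤ a < q, gcd(a,q) = 1}. Then S_k(q) = Ŝ_k(q). -/

import Mathlib

/-- The Hurwitz zeta function `ζ(k,x) = ∑_{n≥0} 1/(n+x)^k`. -/
noncomputable def hurwitz (k : ℕ) (x : ℝ) : ℝ :=
  ∑' n : ℕ, 1 / ((n : ℝ) + x) ^ k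

open Finset Real

noncomputable def zk (k : ℕ) : ℝ := ∑' n : ℕ, 1 / (n : ℝ) ^ k

lemma summable_g {k : ℕ} (hk : 2 ≤ k) : Summable (fun n : ℕ => 1 / (n : ℝ) ^ k) :=
  summable_one_div_nat_pow.mpr (by omega)

lemma summable_hurwitz {k : ℕ} (hk : 2 ≤ k) {x : ℝ} (hx : 0 < x) :
    Summable (fun n : ℕ => 1 / ((n : ℝ) + x) ^ k) := by
  rw [← summable_nat_add_iff 1]
  refine Summable.of_nonneg_of_le (fun n => by positivity) (fun n => ?_)
    ((summable_nat_add_iff 1).mpr (summable_g hk))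
  apply one_div_le_one_div_of_le (by positivity)
  apply pow_le_pow_left₀ (by positivity)
  push_cast; linarith

lemma hurwitz_pos {k : ℕ} (hk : 2 ≤ k) {x : ℝ} (hx : 0 < x) : 0 < hurwitz k x := by
  apply Summable.tsum_pos (summable_hurwitz hk hx) (fun n => by positivity) 0
  simp only [Nat.cast_zero, zero_add]
  positivity

lemma sum_hurwitz_eq (k m : ℕ) (hk : 2 ≤ k) (hm : 0 < m) :
    ∑ a ∈ Finset.Icc 1 m, hurwitz k ((a : ℝ) / m) = (m : ℝ) ^ k * zk k := by
  set g : ℕ → ℝ := fun n => 1 / (n : ℝ) ^ k with hg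
  have hgsum : HasSum g (zk k) := (summable_g hk).hasSum
  set F : Fin m × ℕ → ℕ := fun p => p.2 * m + (p.1 : ℕ) + 1 with hF
  have hFinj : Function.Injective F := by
    rintro ⟨a₁, n₁⟩ ⟨a₂, n₂⟩ h
    simp only [hF] at h
    have h1 : (a₁ : ℕ) < m := a₁.2
    have h2 : (a₂ : ℕ) < m := a₂.2
    have h' : (a₁ : ℕ) + n₁ * m = (a₂ : ℕ) + n₂ * m := by omega
    have ha : (a₁ : ℕ) = (a₂ : ℕ) := by
      have := congrArg (· % m) h'
      simpa [Nat.add_mul_mod_self_right, Nat.mod_eq_of_lt h1, Nat.mod_eq_of_lt h2] using this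
    have hn : n₁ = n₂ := by
      rw [ha] at h
      have := Nat.eq_of_mul_eq_mul_right hm (by omega : n₁ * m = n₂ * m)
      exact this
    ext <;> simp [ha, hn]
  have hzero : ∀ x ∉ Set.range F, g x = 0 := by
    intro x hx
    have hx0 : x = 0 := by
      by_contra h
      apply hx
      refine ⟨(⟨(x - 1) % m, Nat.mod_lt _ hm⟩, (x - 1) / m), ?_⟩
      simp only [hF]
      have := Nat.div_add_mod (x - 1) m
      have h2 : (x - 1) / m * m = m * ((x - 1) / m) := Nat.mul_comm _ _
      omega
    simp [hx0, hg, zero_pow (by omega : k ≠ 0)]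
  have hgF : HasSum (g ∘ F) (zk k) := (hFinj.hasSum_iff hzero).mpr hgsum
  have hfib : ∀ a : Fin m, HasSum (fun n => g (F (a, n))) (∑' n, g (F (a, n))) :=
    fun a => (hgF.summable.prod_factor a).hasSum
  have htot : HasSum (fun a : Fin m => ∑' n, g (F (a, n))) (zk k) :=
    hgF.prod_fiberwise hfib
  have hmne : (m : ℝ) ≠ 0 := Nat.cast_ne_zero.mpr hm.ne'
  have hterm : ∀ (a : Fin m) (n : ℕ),
      1 / ((n : ℝ) + ((a : ℕ) + 1 : ℕ) / m) ^ k = (m : ℝ) ^ k * g (F (a, n)) := by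
    intro a n
    have hcast : ((n : ℝ) + (((a : ℕ) + 1 : ℕ) : ℝ) / m) = ((F (a, n) : ℕ) : ℝ) / m := by
      simp only [hF]
      push_cast
      field_simp
      ring
    rw [hcast, div_pow, one_div, inv_div]
    simp [hg, mul_one_div, div_eq_mul_inv]
  have hhur : ∀ a : Fin m, hurwitz k ((((a : ℕ) + 1 : ℕ) : ℝ) / m)
      = (m : ℝ) ^ k * ∑' n, g (F (a, n)) := by
    intro a
    rw [hurwitz]
    rw [tsum_congr (fun n => hterm a n), tsum_mul_left]
  have hsum2 : ∑ a : Fin m, hurwitz k ((((a : ℕ) + 1 : ℕ) : ℝ) / m) = (m : ℝ) ^ k * zk k := by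
    rw [Finset.sum_congr rfl (fun a _ => hhur a), ← Finset.mul_sum]
    congr 1
    rw [← tsum_fintype (L := .unconditional _)]
    exact htot.tsum_eq
  rw [← hsum2, Fin.sum_univ_eq_sum_range (fun i => hurwitz k (((i + 1 : ℕ) : ℝ) / m)) m]
  refine Finset.sum_nbij' (fun a => a - 1) (fun i => i + 1) ?_ ?_ ?_ ?_ ?_ <;>
    intro a ha <;> simp only [Finset.mem_Icc, Finset.mem_range] at *
  · omega
  · omega
  · omega
  · omega
  · rw [Nat.sub_add_cancel ha.1]

open ArithmeticFunction ArithmeticFunction.Moebius ArithmeticFunction.zeta in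
lemma sum_moebius_divisors (n : ℕ) :
    (∑ d ∈ n.divisors, (μ d : ℝ)) = if n = 1 then 1 else 0 := by
  have h : ((μ * ζ : ArithmeticFunction ℤ) n : ℝ) = ((1 : ArithmeticFunction ℤ) n : ℝ) := by
    rw [moebius_mul_coe_zeta]
  rw [coe_mul_zeta_apply, one_apply] at h
  push_cast at h
  rw [h]

open ArithmeticFunction ArithmeticFunction.Moebius ArithmeticFunction.zeta in
lemma sum_coprime_hurwitz (k q : ℕ) (hk : 2 ≤ k) (hq : 3 ≤ q) :
    ∑ a ∈ (Finset.Icc 1 q).filter (fun a => Nat.Coprime a q), hurwitz k ((a : ℝ) / q)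
      = (∑ d ∈ q.divisors, (μ d : ℝ) * ((q / d : ℕ) : ℝ) ^ k) * zk k := by
  have hq0 : q ≠ 0 := by omega
  set F : ℕ → ℝ := fun a => hurwitz k ((a : ℝ) / q) with hFdef
  have step1 : ∀ a ∈ Finset.Icc 1 q,
      (if Nat.Coprime a q then F a else 0)
        = ∑ d ∈ q.divisors.filter (· ∣ a), (μ d : ℝ) * F a := by
    intro a ha
    have hfe : q.divisors.filter (· ∣ a) = (Nat.gcd a q).divisors := by
      ext d
      simp only [Finset.mem_filter, Nat.mem_divisors, Nat.dvd_gcd_iff]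
      constructor
      · rintro ⟨⟨h1, h2⟩, h3⟩
        exact ⟨⟨h3, h1⟩, fun hg => hq0 (Nat.eq_zero_of_gcd_eq_zero_right hg)⟩
      · rintro ⟨⟨h1, h2⟩, h3⟩
        exact ⟨⟨h2, hq0⟩, h1⟩
    rw [← Finset.sum_mul, hfe, sum_moebius_divisors]
    by_cases hc : Nat.Coprime a q
    · rw [if_pos hc, if_pos hc, one_mul]
    · rw [if_neg hc, if_neg hc, zero_mul]
  rw [Finset.sum_filter, Finset.sum_congr rfl step1]
  have step2 : ∑ a ∈ Finset.Icc 1 q, ∑ d ∈ q.divisors.filter (· ∣ a), (μ d : ℝ) * F a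
      = ∑ d ∈ q.divisors, (μ d : ℝ) * ∑ a ∈ (Finset.Icc 1 q).filter (d ∣ ·), F a := by
    simp only [Finset.sum_filter, Finset.mul_sum]
    rw [Finset.sum_comm]
    refine Finset.sum_congr rfl fun d _ => Finset.sum_congr rfl fun a _ => ?_
    split <;> simp
  rw [step2]
  have step3 : ∀ d ∈ q.divisors, (μ d : ℝ) * ∑ a ∈ (Finset.Icc 1 q).filter (d ∣ ·), F a
      = (μ d : ℝ) * ((q / d : ℕ) : ℝ) ^ k * zk k := by
    intro d hd
    obtain ⟨hdvd, -⟩ := Nat.mem_divisors.mp hd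
    have hd0 : 0 < d := Nat.pos_of_dvd_of_pos hdvd (by omega)
    have hqd0 : 0 < q / d := Nat.div_pos (Nat.le_of_dvd (by omega) hdvd) hd0
    have hre : ∑ a ∈ (Finset.Icc 1 q).filter (d ∣ ·), F a
        = ∑ b ∈ Finset.Icc 1 (q / d), F (d * b) := by
      refine Finset.sum_nbij' (fun a => a / d) (fun b => d * b) ?_ ?_ ?_ ?_ ?_ <;>
          intro a ha <;>
          simp only [Finset.mem_filter, Finset.mem_Icc] at *
      · obtain ⟨⟨h1, h2⟩, h3⟩ := ha
        exact ⟨Nat.one_le_div_iff hd0 |>.mpr (Nat.le_of_dvd (by omega) h3),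
          Nat.div_le_div_right h2⟩
      · obtain ⟨h1, h2⟩ := ha
        refine ⟨⟨by nlinarith, ?_⟩, Dvd.intro _ rfl⟩
        calc d * a ≤ d * (q / d) := Nat.mul_le_mul_left d h2
          _ = q := Nat.mul_div_cancel' hdvd
      · exact Nat.mul_div_cancel' ha.2
      · exact Nat.mul_div_cancel_left _ hd0
      · rw [Nat.mul_div_cancel' ha.2]
    rw [hre]
    have harg : ∀ b : ℕ, F (d * b) = hurwitz k ((b : ℝ) / ((q / d : ℕ) : ℝ)) := by
      intro b
      have hqe : (q : ℝ) = (d : ℝ) * ((q / d : ℕ) : ℝ) := by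
        rw [← Nat.cast_mul, Nat.mul_div_cancel' hdvd]
      rw [hFdef]
      simp only
      rw [hqe, Nat.cast_mul, mul_div_mul_left _ _ (by exact_mod_cast hd0.ne')]
    rw [Finset.sum_congr rfl fun b _ => harg b, sum_hurwitz_eq k (q / d) hk hqd0,
      mul_assoc]
  rw [Finset.sum_congr rfl step3, ← Finset.sum_mul]

lemma zk_eq_rat_mul_pi_pow (k : ℕ) (hk : 2 ≤ k) (hkeven : Even k) :
    ∃ r : ℚ, zk k = (r : ℝ) * Real.pi ^ k := by
  obtain ⟨j, hj⟩ := hkeven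
  have hj' : k = 2 * j := by omega
  have hj0 : j ≠ 0 := by omega
  refine ⟨(-1) ^ (j + 1) * 2 ^ (2 * j - 1) * bernoulli (2 * j) / (Nat.factorial (2 * j)), ?_⟩
  have h := hasSum_zeta_nat hj0
  have hzv : zk k = (-1 : ℝ) ^ (j + 1) * 2 ^ (2 * j - 1) * π ^ (2 * j) *
      (bernoulli (2 * j) : ℝ) / (Nat.factorial (2 * j) : ℝ) := by
    rw [zk, hj']; exact h.tsum_eq
  rw [hzv, hj']
  push_cast
  ring

open ArithmeticFunction ArithmeticFunction.Moebius ArithmeticFunction.zeta in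
theorem span_eq_span_insert_one_of_even (k q : ℕ) (hk : 2 ≤ k) (hkeven : Even k)
    (hq : 3 ≤ q) :
    Submodule.span ℚ
        {x : ℝ | ∃ a : ℕ, 1 ≤ a ∧ a < q ∧ Nat.Coprime a q ∧
          x = hurwitz k (a / q) / Real.pi ^ k} =
      Submodule.span ℚ
        (insert (1 : ℝ)
          {x : ℝ | ∃ a : ℕ, 1 ≤ a ∧ a < q ∧ Nat.Coprime a q ∧
            x = hurwitz k (a / q) / Real.pi ^ k}) := by
  set s : Set ℝ := {x : ℝ | ∃ a : ℕ, 1 ≤ a ∧ a < q ∧ Nat.Coprime a q ∧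
    x = hurwitz k (a / q) / Real.pi ^ k} with hs
  symm
  apply Submodule.span_insert_eq_span
  obtain ⟨R, hR⟩ := zk_eq_rat_mul_pi_pow k hk hkeven
  set C : ℚ := ∑ d ∈ q.divisors, (μ d : ℚ) * ((q / d : ℕ) : ℚ) ^ k with hC
  set A := (Finset.Icc 1 q).filter (fun a => Nat.Coprime a q) with hA
  have hπ : (0 : ℝ) < Real.pi ^ k := by positivity
  have hmemA : ∀ a ∈ A, 1 ≤ a ∧ a < q ∧ Nat.Coprime a q := by
    intro a ha
    obtain ⟨hIcc, hcop⟩ := Finset.mem_filter.mp ha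
    obtain ⟨h1, h2⟩ := Finset.mem_Icc.mp hIcc
    refine ⟨h1, ?_, hcop⟩
    rcases lt_or_eq_of_le h2 with h | h
    · exact h
    · subst h
      have := hcop
      rw [Nat.Coprime, Nat.gcd_self] at this
      omega
  have hsum_mem : (∑ a ∈ A, hurwitz k ((a : ℝ) / q) / Real.pi ^ k) ∈ Submodule.span ℚ s := by
    refine Submodule.sum_mem _ fun a ha => Submodule.subset_span ?_
    obtain ⟨h1, h2, h3⟩ := hmemA a ha
    exact ⟨a, h1, h2, h3, rfl⟩
  have hval : ∑ a ∈ A, hurwitz k ((a : ℝ) / q) / Real.pi ^ k = ((C * R : ℚ) : ℝ) := by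
    rw [← Finset.sum_div, sum_coprime_hurwitz k q hk hq, hR]
    simp only [hC]
    push_cast
    rw [div_eq_mul_inv, ← mul_assoc, mul_assoc _ (Real.pi ^ k),
      mul_inv_cancel₀ hπ.ne', mul_one]
  have hpos : 0 < ∑ a ∈ A, hurwitz k ((a : ℝ) / q) / Real.pi ^ k := by
    apply Finset.sum_pos
    · intro a ha
      obtain ⟨h1, h2, h3⟩ := hmemA a ha
      have : (0 : ℝ) < (a : ℝ) / q := by
        apply div_pos <;> [exact_mod_cast h1; exact_mod_cast (by omega : 0 < q)]
      exact div_pos (hurwitz_pos hk this) hπ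
    · refine ⟨1, Finset.mem_filter.mpr ⟨Finset.mem_Icc.mpr ⟨le_refl 1, by omega⟩,
        Nat.coprime_one_left q⟩⟩
  have hCR : (C * R : ℚ) ≠ 0 := by
    intro h
    rw [hval, h] at hpos
    simp at hpos
  have h1 : (1 : ℝ) = ((C * R)⁻¹ : ℚ) • (((C * R) : ℚ) : ℝ) := by
    rw [Rat.smul_def, ← Rat.cast_mul, inv_mul_cancel₀ hCR, Rat.cast_one]
  rw [h1, ← hval]
  exact Submodule.smul_mem _ _ hsum_mem
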